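/- Let s ≥ 2, k ≥ 2s - 2, ω₁,…,ω_s ∈ ℂ pairwise distinct, η₁,…,η_s ∈ ℂ, and let f_ω(x) = ∏_{i=1}^s (x - ω_i). If dim Z(η, ω; s, k) > k + 1 - s, then η_i = f_ω''(ω_i)/f_ω'(ω_i) = Σ_{j≠i} 2/(ω_i - ω_j) for every i. -/

import Mathlib

set_option synthInstance.maxHeartbeats 1000000
set_option maxHeartbeats 1000000
open Polynomial

noncomputable def Zspace {s : ℕ} (η ω : Fin s → ℂ) (k : ℕ) :
    Submodule ℂ (Polynomial ℂ) where
  carrier := {p | p.degree ≤ (k : ℕ) ∧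
    ∀ i, (derivative p).eval (ω i) = η i * p.eval (ω i)}
  add_mem' := by
    rintro a b ⟨ha1, ha2⟩ ⟨hb1, hb2⟩
    refine ⟨le_trans (degree_add_le a b) (max_le ha1 hb1), fun i => ?_⟩
    simp [ha2 i, hb2 i, mul_add]
  zero_mem' := by simp
  smul_mem' := by
    rintro c a ⟨ha1, ha2⟩
    refine ⟨le_trans (degree_smul_le c a) ha1, fun i => ?_⟩
    simp [ha2 i]
    ring

open Finset in
private lemma exists_combo {s k : ℕ} (η ω : Fin s → ℂ)
    (hdeg : k + 1 - s < Module.finrank ℂ (Zspace η ω k)) (hsk : s ≤ k + 1) :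
    ∃ c : Fin s → ℂ, c ≠ 0 ∧ ∀ p : ℂ[X], p.degree ≤ (k : ℕ) →
      ∑ i, c i * ((derivative p).eval (ω i) - η i * p.eval (ω i)) = 0 := by
  classical
  have hmem : ∀ p : ℂ[X], p ∈ Polynomial.degreeLT ℂ (k+1) ↔ p.degree ≤ (k : ℕ) := by
    intro p
    rw [Polynomial.degreeLT_succ_eq_degreeLE, Polynomial.mem_degreeLE]
  set V := Polynomial.degreeLT ℂ (k+1) with hV
  let T : V →ₗ[ℂ] (Fin s → ℂ) :=
  { toFun := fun p i => (derivative p.1).eval (ω i) - η i * (p.1).eval (ω i)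
    map_add' := by intro a b; funext i; simp; ring
    map_smul' := by intro m a; funext i; simp; ring }
  -- Zspace ≃ ker T
  have e : Zspace η ω k ≃ₗ[ℂ] LinearMap.ker T :=
  { toFun := fun p => ⟨⟨p.1, (hmem p.1).2 p.2.1⟩, by
      change T _ = 0
      funext i
      simp [T, sub_eq_zero]
      exact p.2.2 i⟩
    invFun := fun q => ⟨q.1.1, (hmem q.1.1).1 q.1.2, fun i => by
      have hq : eval (ω i) (derivative q.1.1) - η i * eval (ω i) q.1.1 = 0 :=
        congrFun (LinearMap.mem_ker.mp q.2) i
      exact sub_eq_zero.mp hq⟩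
    map_add' := by intro a b; rfl
    map_smul' := by intro m a; rfl
    left_inv := fun p => rfl
    right_inv := fun q => rfl }
  have hVfd : FiniteDimensional ℂ V := Module.Finite.equiv (Polynomial.degreeLTEquiv ℂ (k+1)).symm
  have hfinV : Module.finrank ℂ V = k + 1 := by
    rw [(Polynomial.degreeLTEquiv ℂ (k+1)).finrank_eq]
    simp
  have hrn := T.finrank_range_add_finrank_ker
  have hker : Module.finrank ℂ (LinearMap.ker T) = Module.finrank ℂ (Zspace η ω k) :=
    (e.symm.finrank_eq)
  have hrange : Module.finrank ℂ (LinearMap.range T) < s := by omega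
  have hlt : LinearMap.range T < ⊤ := by
    rcases (le_top : LinearMap.range T ≤ ⊤).lt_or_eq with h | h
    · exact h
    · exfalso
      rw [h] at hrange
      rw [finrank_top, Module.finrank_pi] at hrange
      simp at hrange
  obtain ⟨φ, hφ0, hφ⟩ := (LinearMap.range T).exists_dual_map_eq_bot_of_lt_top hlt inferInstance
  have hrep : ∀ w : Fin s → ℂ, φ w = ∑ i, w i * φ (fun j => if i = j then 1 else 0) := by
    intro w
    conv_lhs => rw [pi_eq_sum_univ w, map_sum]
    simp
  refine ⟨fun i => φ (fun j => if i = j then 1 else 0), ?_, ?_⟩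
  · intro h
    apply hφ0
    refine LinearMap.ext fun w => ?_
    rw [hrep w]
    refine Finset.sum_eq_zero fun i _ => ?_
    have : φ (fun j => if i = j then 1 else 0) = 0 := congrFun h i
    simp [this]
  · intro p hp
    have hpV : p ∈ V := (hmem p).2 hp
    have hmemr : T ⟨p, hpV⟩ ∈ LinearMap.range T := ⟨_, rfl⟩
    have h0 : φ (T ⟨p, hpV⟩) = 0 := by
      have : φ (T ⟨p, hpV⟩) ∈ Submodule.map φ (LinearMap.range T) :=
        Submodule.mem_map_of_mem hmemr
      rw [hφ] at this
      simpa using this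
    rw [hrep] at h0
    refine Eq.trans ?_ h0
    exact Finset.sum_congr rfl fun i _ => by simp only [T, LinearMap.coe_mk, AddHom.coe_mk]; ring

private lemma double_root_eval {a : ℂ} {p : ℂ[X]} (h : (X - C a) ^ 2 ∣ p) :
    p.eval a = 0 ∧ (derivative p).eval a = 0 := by
  obtain ⟨q, rfl⟩ := h
  constructor
  · simp
  · simp [derivative_mul, derivative_pow]

open Finset in
theorem stmt17 (s k : ℕ) (hs : 2 ≤ s) (hk : 2 * s - 2 ≤ k)
    (η ω : Fin s → ℂ) (hω : Function.Injective ω)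
    (hdeg : k + 1 - s < Module.finrank ℂ (Zspace η ω k)) :
    ∀ i : Fin s,
      η i = (derivative (derivative (∏ j, (X - C (ω j))))).eval (ω i) /
          (derivative (∏ j, (X - C (ω j)))).eval (ω i) ∧
      η i = ∑ j ∈ Finset.univ.erase i, 2 / (ω i - ω j) := by
  classical
  intro i
  obtain ⟨c, hc0, hc⟩ := exists_combo η ω hdeg (by omega)
  have hωne : ∀ {a b : Fin s}, a ≠ b → ω a - ω b ≠ 0 :=
    fun hab => sub_ne_zero.mpr fun h => hab (hω h)
  -- Step 1 : all coefficients are nonzero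
  have hall : ∀ j, c j ≠ 0 := by
    obtain ⟨j0, hj0⟩ := Function.ne_iff.mp hc0
    have hj0' : c j0 ≠ 0 := hj0
    intro j hj
    have hjj0 : j ≠ j0 := by rintro rfl; exact hj0 hj
    set u : Finset (Fin s) := (univ.erase j).erase j0 with hu
    have hj0mem : j0 ∈ univ.erase j := mem_erase.mpr ⟨Ne.symm hjj0, mem_univ j0⟩
    have hcard : u.card = s - 2 := by
      rw [hu, card_erase_of_mem hj0mem, card_erase_of_mem (mem_univ j), card_univ,
        Fintype.card_fin]
      omega
    set p : ℂ[X] := (X - C (ω j0)) * ∏ l ∈ u, (X - C (ω l)) ^ 2 with hp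
    have hdegp : p.degree ≤ (k : ℕ) := by
      rw [← natDegree_le_iff_degree_le]
      refine le_trans natDegree_mul_le ?_
      have h2 : (∏ l ∈ u, (X - C (ω l)) ^ 2).natDegree ≤ ∑ l ∈ u, 2 := by
        refine le_trans (natDegree_prod_le _ _) (Finset.sum_le_sum fun l _ => ?_)
        rw [natDegree_pow, natDegree_X_sub_C]
      rw [Finset.sum_const, smul_eq_mul] at h2
      have h1 : (X - C (ω j0)).natDegree = 1 := natDegree_X_sub_C _
      omega
    have hsump := hc p hdegp
    rw [Finset.sum_eq_single j0 ?_ (fun h => absurd (mem_univ j0) h)] at hsump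
    · have hpe : p.eval (ω j0) = 0 := by simp [hp]
      have hpd : (derivative p).eval (ω j0) = ∏ l ∈ u, (ω j0 - ω l) ^ 2 := by
        rw [hp, derivative_mul]
        simp [eval_prod]
      rw [hpe, hpd, mul_zero, sub_zero] at hsump
      have hprodne : (∏ l ∈ u, (ω j0 - ω l) ^ 2) ≠ 0 :=
        Finset.prod_ne_zero_iff.mpr fun l hl =>
          pow_ne_zero _ (hωne (Ne.symm (mem_erase.mp hl).1))
      exact hprodne ((mul_eq_zero.mp hsump).resolve_left hj0')
    · intro b _ hb
      by_cases hbj : b = j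
      · rw [hbj, hj, zero_mul]
      · have hbu : b ∈ u := mem_erase.mpr ⟨hb, mem_erase.mpr ⟨hbj, mem_univ b⟩⟩
        have hdvd : (X - C (ω b)) ^ 2 ∣ p :=
          Dvd.dvd.mul_left (dvd_prod_of_mem _ hbu) _
        obtain ⟨h1, h2⟩ := double_root_eval hdvd
        rw [h1, h2]; ring
  -- Step 2 : compute η i
  set t : Finset (Fin s) := univ.erase i with ht
  have hcardt : t.card = s - 1 := by
    rw [ht, card_erase_of_mem (mem_univ i), card_univ, Fintype.card_fin]
  set g : ℂ[X] := ∏ j ∈ t, (X - C (ω j)) with hg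
  have hGeval : g.eval (ω i) = ∏ l ∈ t, (ω i - ω l) := by simp [hg, eval_prod]
  have hGne : g.eval (ω i) ≠ 0 := by
    rw [hGeval]
    exact Finset.prod_ne_zero_iff.mpr fun l hl => hωne (Ne.symm (mem_erase.mp hl).1)
  have hdegg2 : (g ^ 2).degree ≤ (k : ℕ) := by
    rw [← natDegree_le_iff_degree_le, natDegree_pow]
    have h2 : g.natDegree ≤ ∑ l ∈ t, 1 := by
      refine le_trans (natDegree_prod_le _ _) (Finset.sum_le_sum fun l _ => ?_)
      rw [natDegree_X_sub_C]
    rw [Finset.sum_const, smul_eq_mul, mul_one] at h2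
    omega
  have hsum := hc (g ^ 2) hdegg2
  rw [Finset.sum_eq_single i ?_ (fun h => absurd (mem_univ i) h)] at hsum
  swap
  · intro b _ hb
    have hbt : b ∈ t := mem_erase.mpr ⟨hb, mem_univ b⟩
    have hdvd : (X - C (ω b)) ^ 2 ∣ g ^ 2 :=
      pow_dvd_pow_of_dvd (dvd_prod_of_mem (fun j => X - C (ω j)) hbt : X - C (ω b) ∣ g) 2
    obtain ⟨h1, h2⟩ := double_root_eval hdvd
    rw [h1, h2]; ring
  have he1 : (g ^ 2).eval (ω i) = g.eval (ω i) ^ 2 := by simp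
  have he2 : (derivative (g ^ 2)).eval (ω i)
      = 2 * g.eval (ω i) * (derivative g).eval (ω i) := by
    rw [derivative_pow]
    simp
  rw [he1, he2] at hsum
  have h2 : 2 * g.eval (ω i) * (derivative g).eval (ω i)
      - η i * g.eval (ω i) ^ 2 = 0 :=
    (mul_eq_zero.mp hsum).resolve_left (hall i)
  have h3 : η i * g.eval (ω i) - 2 * (derivative g).eval (ω i) = 0 := by
    rcases mul_eq_zero.mp
      (show g.eval (ω i) * (η i * g.eval (ω i) - 2 * (derivative g).eval (ω i)) = 0 by
        linear_combination -h2) with h | h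
    · exact absurd h hGne
    · exact h
  have hη : η i = 2 * (derivative g).eval (ω i) / g.eval (ω i) := by
    rw [eq_div_iff hGne]
    linear_combination h3
  constructor
  · -- first form
    have hf : ∏ j, (X - C (ω j)) = (X - C (ω i)) * g :=
      (Finset.mul_prod_erase univ _ (mem_univ i)).symm
    rw [hf, derivative_mul]
    have hd2 : (derivative (derivative (X - C (ω i)) * g + (X - C (ω i)) * derivative g)).eval (ω i)
        = 2 * (derivative g).eval (ω i) := by
      simp [derivative_mul]
      ring
    have hd1 : (derivative (X - C (ω i)) * g + (X - C (ω i)) * derivative g).eval (ω i)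
        = g.eval (ω i) := by
      simp
    rw [hd2, hd1, hη]
  · -- second form
    have hG' : (derivative g).eval (ω i) = ∑ j ∈ t, ∏ l ∈ t.erase j, (ω i - ω l) := by
      rw [hg, ← Lagrange.nodal_eq, Lagrange.derivative_nodal, eval_finset_sum]
      exact Finset.sum_congr rfl fun j hj => Lagrange.eval_nodal
    rw [hη, hG', Finset.mul_sum, Finset.sum_div]
    refine Eq.symm (Finset.sum_congr rfl fun j hj => ?_)
    have hPG : (∏ l ∈ t.erase j, (ω i - ω l)) * (ω i - ω j) = g.eval (ω i) := by
      rw [hGeval]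
      exact Finset.prod_erase_mul t _ hj
    have hPne : (∏ l ∈ t.erase j, (ω i - ω l)) ≠ 0 :=
      Finset.prod_ne_zero_iff.mpr fun l hl =>
        hωne (Ne.symm (mem_erase.mp (mem_erase.mp hl).2).1)
    have hji : ω i - ω j ≠ 0 := hωne (Ne.symm (mem_erase.mp hj).1)
    rw [← hPG]
    field_simp
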